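/- arXiv:1212.0294 — 2 statements merged into one kernel-verified Lean document; each statement's English description precedes it below -/
import Mathlib

section
/- Let d be a positive non-square integer, let l be the minimal period of the continued fraction expansion of √d, and let p_{l−1}/q_{l−1} be the (l−1)-th convergent of √d. Then ε = p_{l−1} + q_{l−1}√d satisfies |p_{l−1}² − d·q_{l−1}²| = 1 and ε > 1, and ε is the fundamental unit of ℤ[√d]: for all integers u, v with |u² − d·v²| = 1 and u + v√d > 1, one has u + v√d ≥ ε. -/
/-- The `n`-th total quotient `α_n` of the continued fraction expansion of `θ`:
`α_0 = θ`, `α_{n+1} = 1/(α_n - ⌊α_n⌋)`. -/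
noncomputable def cfAlpha (θ : ℝ) : ℕ → ℝ
  | 0 => θ
  | n + 1 => 1 / Int.fract (cfAlpha θ n)

/-- The `n`-th partial quotient `a_n` of the continued fraction expansion of `θ`. -/
noncomputable def cfA (θ : ℝ) (n : ℕ) : ℤ := ⌊cfAlpha θ n⌋

/-- Numerators of the convergents of `θ`, shifted by two:
`cfP θ (n+2) = p_n`, with `p_{-2} = 0`, `p_{-1} = 1`, `p_n = a_n p_{n-1} + p_{n-2}`. -/
noncomputable def cfP (θ : ℝ) : ℕ → ℤ
  | 0 => 0
  | 1 => 1
  | n + 2 => cfA θ n * cfP θ (n + 1) + cfP θ n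

/-- Denominators of the convergents of `θ`, shifted by two:
`cfQ θ (n+2) = q_n`, with `q_{-2} = 1`, `q_{-1} = 0`, `q_n = a_n q_{n-1} + q_{n-2}`. -/
noncomputable def cfQ (θ : ℝ) : ℕ → ℤ
  | 0 => 1
  | 1 => 0
  | n + 2 => cfA θ n * cfQ θ (n + 1) + cfQ θ n

namespace CFaux

variable {θ : ℝ}

lemma alpha_irrational (hθ : Irrational θ) : ∀ n, Irrational (cfAlpha θ n)
  | 0 => hθ
  | n + 1 => by
    have ih := alpha_irrational hθ n
    have h : Irrational (Int.fract (cfAlpha θ n)) := by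
      rw [Int.fract]; exact ih.sub_intCast _
    simpa [cfAlpha, one_div] using h.inv

lemma fract_pos (hθ : Irrational θ) (n : ℕ) : 0 < Int.fract (cfAlpha θ n) := by
  have h : Irrational (Int.fract (cfAlpha θ n)) := by
    rw [Int.fract]; exact (alpha_irrational hθ n).sub_intCast _
  exact lt_of_le_of_ne (Int.fract_nonneg _) (Ne.symm h.ne_zero)

lemma alpha_succ_gt_one (hθ : Irrational θ) (n : ℕ) : 1 < cfAlpha θ (n + 1) := by
  have h0 := fract_pos hθ n
  have h1 := Int.fract_lt_one (cfAlpha θ n)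
  show 1 < 1 / Int.fract (cfAlpha θ n)
  rw [lt_div_iff₀ h0]; linarith

lemma alpha_gt_one (hθ : Irrational θ) (h1 : 1 < θ) : ∀ n, 1 < cfAlpha θ n
  | 0 => h1
  | n + 1 => alpha_succ_gt_one hθ n

lemma alpha_pos (hθ : Irrational θ) (h1 : 1 < θ) (n : ℕ) : 0 < cfAlpha θ n :=
  lt_trans one_pos (alpha_gt_one hθ h1 n)

lemma cfA_ge_one (hθ : Irrational θ) (h1 : 1 < θ) (n : ℕ) : 1 ≤ cfA θ n := by
  rw [cfA, Int.le_floor]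
  exact_mod_cast (alpha_gt_one hθ h1 n).le

lemma alpha_succ_mul (hθ : Irrational θ) (n : ℕ) :
    cfAlpha θ (n + 1) * (cfAlpha θ n - cfA θ n) = 1 := by
  have h0 := fract_pos hθ n
  show (1 / Int.fract (cfAlpha θ n)) * _ = 1
  rw [cfA, Int.self_sub_floor]
  field_simp

lemma theta_eq (hθ : Irrational θ) : ∀ n,
    θ * (cfAlpha θ n * (cfQ θ (n + 1) : ℝ) + (cfQ θ n : ℝ)) =
      cfAlpha θ n * (cfP θ (n + 1) : ℝ) + (cfP θ n : ℝ) := by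
  intro n
  induction n with
  | zero => simp [cfAlpha, cfP, cfQ]
  | succ n ih =>
    have key := alpha_succ_mul hθ n
    show θ * (cfAlpha θ (n+1) * ((cfQ θ (n+2) : ℤ) : ℝ) + _) = _
    rw [show cfQ θ (n+2) = cfA θ n * cfQ θ (n + 1) + cfQ θ n from rfl,
        show cfP θ (n+2) = cfA θ n * cfP θ (n + 1) + cfP θ n from rfl]
    push_cast
    linear_combination (cfAlpha θ (n+1)) * ih -
      (θ * (cfQ θ (n+1) : ℝ) - (cfP θ (n+1) : ℝ)) * key

lemma det : ∀ n, cfP θ (n + 1) * cfQ θ n - cfP θ n * cfQ θ (n + 1) = (-1) ^ n := by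
  intro n
  induction n with
  | zero => simp [cfP, cfQ]
  | succ n ih =>
    rw [show cfQ θ (n+2) = cfA θ n * cfQ θ (n + 1) + cfQ θ n from rfl,
        show cfP θ (n+2) = cfA θ n * cfP θ (n + 1) + cfP θ n from rfl, pow_succ]
    linear_combination (-1 : ℤ) * ih


lemma cfP_ge_one (hθ : Irrational θ) (h1 : 1 < θ) : ∀ n, 1 ≤ cfP θ (n + 1)
  | 0 => le_refl _
  | 1 => by
    have := cfA_ge_one hθ h1 0
    show (1 : ℤ) ≤ cfA θ 0 * 1 + 0
    linarith
  | n + 2 => by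
    have h2 := cfP_ge_one hθ h1 (n + 1)
    have h3 := cfP_ge_one hθ h1 n
    have h4 := cfA_ge_one hθ h1 (n + 1)
    show (1 : ℤ) ≤ cfA θ (n+1) * cfP θ (n + 2) + cfP θ (n + 1)
    nlinarith

lemma cfP_nonneg (hθ : Irrational θ) (h1 : 1 < θ) : ∀ n, 0 ≤ cfP θ n
  | 0 => le_refl _
  | n + 1 => le_trans zero_le_one (cfP_ge_one hθ h1 n)

lemma cfQ_nonneg (hθ : Irrational θ) (h1 : 1 < θ) : ∀ n, 0 ≤ cfQ θ n
  | 0 => zero_le_one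
  | 1 => le_refl _
  | n + 2 => by
    have h2 := cfQ_nonneg hθ h1 (n + 1)
    have h3 := cfQ_nonneg hθ h1 n
    have h4 := cfA_ge_one hθ h1 n
    show (0 : ℤ) ≤ cfA θ n * cfQ θ (n + 1) + cfQ θ n
    nlinarith

lemma cfQ_ge_one (hθ : Irrational θ) (h1 : 1 < θ) : ∀ n, 1 ≤ cfQ θ (n + 2)
  | 0 => by show (1:ℤ) ≤ cfA θ 0 * 0 + 1; simp
  | n + 1 => by
    have h2 := cfQ_ge_one hθ h1 n
    have h3 := cfQ_nonneg hθ h1 (n + 1)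
    have h4 := cfA_ge_one hθ h1 (n + 1)
    show (1 : ℤ) ≤ cfA θ (n+1) * cfQ θ (n + 2) + cfQ θ (n + 1)
    nlinarith

lemma cfQ_step (hθ : Irrational θ) (h1 : 1 < θ) : ∀ n, cfQ θ (n + 1) ≤ cfQ θ (n + 2)
  | 0 => by show (0:ℤ) ≤ cfA θ 0 * 0 + 1; simp
  | n + 1 => by
    have h2 := cfQ_nonneg hθ h1 (n + 1)
    have h3 := cfQ_nonneg hθ h1 (n + 2)
    have h4 := cfA_ge_one hθ h1 (n + 1)
    show cfQ θ (n + 2) ≤ cfA θ (n+1) * cfQ θ (n + 2) + cfQ θ (n + 1)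
    nlinarith

lemma cfP_step (hθ : Irrational θ) (h1 : 1 < θ) : ∀ n, cfP θ (n + 1) ≤ cfP θ (n + 2)
  | 0 => by
    have := cfA_ge_one hθ h1 0
    show (1:ℤ) ≤ cfA θ 0 * 1 + 0; linarith
  | n + 1 => by
    have h2 := cfP_nonneg hθ h1 (n + 1)
    have h3 := cfP_nonneg hθ h1 (n + 2)
    have h4 := cfA_ge_one hθ h1 (n + 1)
    show cfP θ (n + 2) ≤ cfA θ (n+1) * cfP θ (n + 2) + cfP θ (n + 1)
    nlinarith

lemma cfQ_mono (hθ : Irrational θ) (h1 : 1 < θ) {m n : ℕ} (h : m ≤ n) :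
    cfQ θ (m + 1) ≤ cfQ θ (n + 1) := by
  induction n, h using Nat.le_induction with
  | base => exact le_refl _
  | succ n hmn ih => exact le_trans ih (cfQ_step hθ h1 n)

lemma cfP_mono (hθ : Irrational θ) (h1 : 1 < θ) {m n : ℕ} (h : m ≤ n) :
    cfP θ (m + 1) ≤ cfP θ (n + 1) := by
  induction n, h using Nat.le_induction with
  | base => exact le_refl _
  | succ n hmn ih => exact le_trans ih (cfP_step hθ h1 n)

lemma cfQ_growth (hθ : Irrational θ) (h1 : 1 < θ) : ∀ n : ℕ, (n : ℤ) + 1 ≤ cfQ θ (n + 3)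
  | 0 => by simpa using cfQ_ge_one hθ h1 1
  | n + 1 => by
    have h2 := cfQ_growth hθ h1 n
    have h3 := cfQ_ge_one hθ h1 n
    have h4 := cfA_ge_one hθ h1 (n + 2)
    have h5 : (0:ℤ) ≤ cfQ θ (n + 3) := cfQ_nonneg hθ h1 _
    show ((n:ℤ) + 1) + 1 ≤ cfA θ (n+2) * cfQ θ (n + 3) + cfQ θ (n + 2)
    nlinarith

lemma denom_pos (hθ : Irrational θ) (h1 : 1 < θ) :
    ∀ n, 0 < cfAlpha θ n * (cfQ θ (n + 1) : ℝ) + (cfQ θ n : ℝ)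
  | 0 => by norm_num [cfQ, cfAlpha]
  | n + 1 => by
    have h2 : (1:ℝ) ≤ (cfQ θ (n + 2) : ℝ) := by exact_mod_cast cfQ_ge_one hθ h1 n
    have h3 : (0:ℝ) ≤ (cfQ θ (n + 1) : ℝ) := by exact_mod_cast cfQ_nonneg hθ h1 (n + 1)
    have h4 := alpha_gt_one hθ h1 (n + 1)
    nlinarith

lemma e_mul (hθ : Irrational θ) (h1 : 1 < θ) (n : ℕ) :
    (θ * (cfQ θ (n + 1) : ℝ) - (cfP θ (n + 1) : ℝ)) *
      (cfAlpha θ n * (cfQ θ (n + 1) : ℝ) + (cfQ θ n : ℝ)) = (-1) ^ (n + 1) := by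
  have hd : ((cfP θ (n + 1) : ℝ) * (cfQ θ n : ℝ) - (cfP θ n : ℝ) * (cfQ θ (n + 1) : ℝ))
      = (-1) ^ n := by exact_mod_cast congrArg (Int.cast : ℤ → ℝ) (det (θ := θ) n)
  have ht := theta_eq hθ n
  rw [pow_succ]
  linear_combination (cfQ θ (n + 1) : ℝ) * ht - hd

lemma e_sign (hθ : Irrational θ) (h1 : 1 < θ) (n : ℕ) :
    0 < (-1 : ℝ) ^ (n + 1) * (θ * (cfQ θ (n + 1) : ℝ) - (cfP θ (n + 1) : ℝ)) := by
  have hm := e_mul hθ h1 n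
  have hdp := denom_pos hθ h1 n
  have h2 : ((-1:ℝ) ^ (n+1)) ^ 2 = 1 := by
    rw [← pow_mul, mul_comm, pow_mul]; norm_num
  have h3 : ((-1:ℝ) ^ (n+1) * (θ * (cfQ θ (n + 1) : ℝ) - (cfP θ (n + 1) : ℝ))) *
      (cfAlpha θ n * (cfQ θ (n + 1) : ℝ) + (cfQ θ n : ℝ)) = 1 := by
    linear_combination ((-1:ℝ) ^ (n+1)) * hm + h2
  by_contra hc
  push_neg at hc
  nlinarith

lemma e_ne_zero (hθ : Irrational θ) (h1 : 1 < θ) (n : ℕ) :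
    θ * (cfQ θ (n + 1) : ℝ) - (cfP θ (n + 1) : ℝ) ≠ 0 := by
  intro h
  have := e_sign hθ h1 n
  rw [h] at this; simp at this

lemma e_abs_mul (hθ : Irrational θ) (h1 : 1 < θ) (n : ℕ) :
    |θ * (cfQ θ (n + 1) : ℝ) - (cfP θ (n + 1) : ℝ)| *
      (cfAlpha θ n * (cfQ θ (n + 1) : ℝ) + (cfQ θ n : ℝ)) = 1 := by
  have hm := e_mul hθ h1 n
  have hdp := denom_pos hθ h1 n
  rcases abs_cases (θ * (cfQ θ (n + 1) : ℝ) - (cfP θ (n + 1) : ℝ)) with ⟨he, _⟩ | ⟨he, _⟩ <;>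
    rw [he] <;> rcases Nat.even_or_odd (n+1) with hp | hp
  · rw [hp.neg_one_pow] at hm; linarith
  · rw [hp.neg_one_pow] at hm; nlinarith
  · rw [hp.neg_one_pow] at hm; nlinarith
  · rw [hp.neg_one_pow] at hm; linarith

lemma e_abs_le (hθ : Irrational θ) (h1 : 1 < θ) (n : ℕ) :
    |θ * (cfQ θ (n + 1) : ℝ) - (cfP θ (n + 1) : ℝ)| * (cfQ θ (n + 1) : ℝ) ≤ 1 := by
  have h2 := e_abs_mul hθ h1 n
  have h3 : (0:ℝ) ≤ (cfQ θ (n + 1) : ℝ) := by exact_mod_cast cfQ_nonneg hθ h1 (n + 1)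
  have h4 : (0:ℝ) ≤ (cfQ θ n : ℝ) := by exact_mod_cast cfQ_nonneg hθ h1 n
  have h5 := alpha_gt_one hθ h1 n
  have h6 : (0:ℝ) ≤ |θ * (cfQ θ (n + 1) : ℝ) - (cfP θ (n + 1) : ℝ)| := abs_nonneg _
  nlinarith

lemma alpha_shift (θ : ℝ) (m : ℕ) : ∀ k, cfAlpha θ (m + k) = cfAlpha (cfAlpha θ m) k
  | 0 => rfl
  | k + 1 => by
    show (1 : ℝ) / Int.fract (cfAlpha θ (m + k)) = 1 / Int.fract (cfAlpha (cfAlpha θ m) k)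
    rw [alpha_shift θ m k]

lemma cfA_shift (θ : ℝ) (m k : ℕ) : cfA θ (m + k) = cfA (cfAlpha θ m) k := by
  rw [cfA, cfA, alpha_shift]

lemma cfP_congr {θ₁ θ₂ : ℝ} (h : ∀ k, cfA θ₁ k = cfA θ₂ k) : ∀ m, cfP θ₁ m = cfP θ₂ m
  | 0 => rfl
  | 1 => rfl
  | m + 2 => by
    show cfA θ₁ m * cfP θ₁ (m + 1) + cfP θ₁ m = cfA θ₂ m * cfP θ₂ (m + 1) + cfP θ₂ m
    rw [h, cfP_congr h (m + 1), cfP_congr h m]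

lemma cfQ_congr {θ₁ θ₂ : ℝ} (h : ∀ k, cfA θ₁ k = cfA θ₂ k) : ∀ m, cfQ θ₁ m = cfQ θ₂ m
  | 0 => rfl
  | 1 => rfl
  | m + 2 => by
    show cfA θ₁ m * cfQ θ₁ (m + 1) + cfQ θ₁ m = cfA θ₂ m * cfQ θ₂ (m + 1) + cfQ θ₂ m
    rw [h, cfQ_congr h (m + 1), cfQ_congr h m]

lemma cf_unique {θ₁ θ₂ : ℝ} (hi1 : Irrational θ₁) (hi2 : Irrational θ₂)
    (hg1 : 1 < θ₁) (hg2 : 1 < θ₂) (h : ∀ k, cfA θ₁ k = cfA θ₂ k) : θ₁ = θ₂ := by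
  by_contra hne
  have habs : 0 < |θ₁ - θ₂| := abs_pos.2 (sub_ne_zero.2 hne)
  obtain ⟨n, hn⟩ := exists_nat_gt (2 / |θ₁ - θ₂|)
  have key : |θ₁ - θ₂| ≤ 2 / ((n : ℝ) + 1) := by
    have hq : ((n : ℤ) + 1 : ℤ) ≤ cfQ θ₁ (n + 3) := cfQ_growth hi1 hg1 n
    have hQ1 : (0:ℝ) < (n : ℝ) + 1 := by positivity
    have hQpos : (0:ℝ) < (cfQ θ₁ (n + 3) : ℝ) := by
      have : ((n : ℝ) + 1) ≤ (cfQ θ₁ (n + 3) : ℝ) := by exact_mod_cast hq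
      linarith
    have hnQ : ((n : ℝ) + 1) ≤ ((cfQ θ₁ (n + 3) : ℤ) : ℝ) := by exact_mod_cast hq
    have hQge1 : (1:ℝ) ≤ ((cfQ θ₁ (n + 3) : ℤ) : ℝ) := by linarith
    have e1 := e_abs_le hi1 hg1 (n + 2)
    have e2 := e_abs_le hi2 hg2 (n + 2)
    have hPeq : cfP θ₂ (n + 3) = cfP θ₁ (n + 3) := cfP_congr (fun k => (h k).symm) _
    have hQeq : cfQ θ₂ (n + 3) = cfQ θ₁ (n + 3) := cfQ_congr (fun k => (h k).symm) _
    rw [hPeq, hQeq] at e2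
    set Q : ℝ := (cfQ θ₁ (n + 3) : ℝ)
    set P : ℝ := (cfP θ₁ (n + 3) : ℝ)
    have hd : |θ₁ - θ₂| * Q ≤ 2 := by
      have hr : (θ₁ * Q - P) - (θ₂ * Q - P) = (θ₁ - θ₂) * Q := by ring
      have : |θ₁ - θ₂| * Q = |(θ₁ * Q - P) - (θ₂ * Q - P)| := by
        rw [hr, abs_mul, abs_of_pos hQpos]
      rw [this]
      calc |(θ₁ * Q - P) - (θ₂ * Q - P)| ≤ |θ₁ * Q - P| + |θ₂ * Q - P| := abs_sub _ _
        _ ≤ 2 := by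
          have g1 : |θ₁ * Q - P| ≤ 1 := by nlinarith [abs_nonneg (θ₁ * Q - P), hQge1]
          have g2 : |θ₂ * Q - P| ≤ 1 := by nlinarith [abs_nonneg (θ₂ * Q - P), hQge1]
          linarith
    have h6 : |θ₁ - θ₂| * ((n : ℝ) + 1) ≤ 2 :=
      le_trans (by nlinarith) hd
    rw [le_div_iff₀ hQ1]; exact h6
  rw [div_lt_iff₀ habs] at hn
  have : (0:ℝ) < (n:ℝ) + 1 := by positivity
  rw [le_div_iff₀ this] at key
  nlinarith

lemma neg_one_pow_mul_self (n : ℕ) : ((-1:ℤ) ^ n) * ((-1:ℤ) ^ n) = 1 := by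
  rw [← pow_add, ← two_mul, pow_mul]; norm_num

lemma e1e2_neg (hθ : Irrational θ) (h1 : 1 < θ) (n : ℕ) :
    (θ * (cfQ θ (n + 1) : ℝ) - (cfP θ (n + 1) : ℝ)) *
      (θ * (cfQ θ (n + 2) : ℝ) - (cfP θ (n + 2) : ℝ)) < 0 := by
  have h2 := mul_pos (e_sign hθ h1 n) (e_sign hθ h1 (n + 1))
  have h3 : ((-1:ℝ) ^ (n + 1)) * ((-1:ℝ) ^ (n + 1 + 1)) = -1 := by
    rw [← pow_add]
    exact Odd.neg_one_pow ⟨n + 1, by ring⟩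
  nlinarith

lemma best_approx (hθ : Irrational θ) (h1 : 1 < θ) (n : ℕ) (u v : ℤ)
    (hv : 1 ≤ v) (hv' : v < cfQ θ (n + 2)) :
    |θ * (cfQ θ (n + 1) : ℝ) - (cfP θ (n + 1) : ℝ)| ≤ |θ * (v : ℝ) - (u : ℝ)| := by
  have hdet1 : cfP θ (n+2) * cfQ θ (n+1) - cfP θ (n+1) * cfQ θ (n+2) = (-1) ^ (n+1) :=
    det (n + 1)
  have hs := neg_one_pow_mul_self n
  set x : ℤ := (-1) ^ n * (u * cfQ θ (n+2) - v * cfP θ (n+2)) with hxdef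
  set y : ℤ := (-1) ^ n * (v * cfP θ (n+1) - u * cfQ θ (n+1)) with hydef
  have hu : x * cfP θ (n+1) + y * cfP θ (n+2) = u := by
    rw [hxdef, hydef]
    linear_combination (-(-1:ℤ) ^ n * u) * hdet1 + u * hs
  have hvv : x * cfQ θ (n+1) + y * cfQ θ (n+2) = v := by
    rw [hxdef, hydef]
    linear_combination (-(-1:ℤ) ^ n * v) * hdet1 + v * hs
  have hQ1nn : (0:ℤ) ≤ cfQ θ (n+1) := cfQ_nonneg hθ h1 _
  have hQ2pos : (1:ℤ) ≤ cfQ θ (n+2) := cfQ_ge_one hθ h1 n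
  -- x ≠ 0
  have hxne : x ≠ 0 := by
    intro hx0
    rw [hx0, zero_mul, zero_add] at hvv
    have hy1 : 1 ≤ y := by nlinarith
    nlinarith
  set e1 : ℝ := θ * (cfQ θ (n + 1) : ℝ) - (cfP θ (n + 1) : ℝ) with he1
  set e2 : ℝ := θ * (cfQ θ (n + 2) : ℝ) - (cfP θ (n + 2) : ℝ) with he2
  have huR : (x:ℝ) * (cfP θ (n+1) : ℝ) + (y:ℝ) * (cfP θ (n+2) : ℝ) = (u:ℝ) := by
    exact_mod_cast congrArg (Int.cast : ℤ → ℝ) hu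
  have hvR : (x:ℝ) * (cfQ θ (n+1) : ℝ) + (y:ℝ) * (cfQ θ (n+2) : ℝ) = (v:ℝ) := by
    exact_mod_cast congrArg (Int.cast : ℤ → ℝ) hvv
  have hxy : θ * (v : ℝ) - (u : ℝ) = (x:ℝ) * e1 + (y:ℝ) * e2 := by
    rw [he1, he2]
    linear_combination huR - θ * hvR
  have hprod : 0 ≤ ((x:ℝ) * e1) * ((y:ℝ) * e2) := by
    rcases eq_or_ne y 0 with hy0 | hy0
    · rw [hy0]; simp
    · have hxyneg : x * y ≤ -1 := by
        rcases lt_or_gt_of_ne hxne with hxn | hxp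
        · rcases lt_or_gt_of_ne hy0 with hyn | hyp
          · nlinarith
          · nlinarith
        · rcases lt_or_gt_of_ne hy0 with hyn | hyp
          · nlinarith
          · nlinarith
      have hee : e1 * e2 < 0 := e1e2_neg hθ h1 n
      have hxyR : ((x:ℝ) * (y:ℝ)) ≤ -1 := by exact_mod_cast hxyneg
      have h0 : 0 < ((x:ℝ) * (y:ℝ)) * (e1 * e2) :=
        mul_pos_of_neg_of_neg (lt_of_le_of_lt hxyR (by norm_num)) hee
      nlinarith
  have hx2 : (1:ℝ) ≤ (x:ℝ) ^ 2 := by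
    have h2 : (1:ℤ) ≤ x ^ 2 := by
      have h3 := Int.one_le_abs (by simpa using hxne)
      nlinarith [sq_abs x]
    exact_mod_cast h2
  have hsq : e1 ^ 2 ≤ (θ * (v : ℝ) - (u : ℝ)) ^ 2 := by
    rw [hxy]
    nlinarith [hprod, hx2, sq_nonneg ((y:ℝ) * e2), sq_nonneg e1]
  exact sq_le_sq.mp hsq


lemma conj_formula {θ α A B C D s dd : ℝ} (R1 : θ * (α * A + B) = α * C + D)
    (R2 : C * B - D * A = s) (R3 : θ ^ 2 = dd) (R4 : s ^ 2 = 1) :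
    α * (s * (C ^ 2 - dd * A ^ 2)) = s * (dd * A * B - C * D) + θ := by
  linear_combination (s * (-(θ * A + C))) * R1 + (s * (α * A ^ 2 + A * B)) * R3 +
    (s * θ) * R2 + θ * R4

lemma neg_one_pow_sq_real (n : ℕ) : ((-1:ℝ) ^ n) ^ 2 = 1 := by
  rw [← pow_mul, mul_comm, pow_mul]; norm_num

lemma conj (d : ℕ) (hirr : Irrational θ) (hsq : θ ^ 2 = (d:ℝ)) (n : ℕ) :
    cfAlpha θ n * ((((-1:ℤ) ^ n * (cfP θ (n+1) ^ 2 - (d:ℤ) * cfQ θ (n+1) ^ 2) : ℤ)) : ℝ) =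
      ((((-1:ℤ) ^ n * ((d:ℤ) * cfQ θ (n+1) * cfQ θ n - cfP θ (n+1) * cfP θ n) : ℤ)) : ℝ) + θ := by
  have R1 := theta_eq hirr n
  have R2 : (cfP θ (n+1) : ℝ) * (cfQ θ n : ℝ) - (cfP θ n : ℝ) * (cfQ θ (n+1) : ℝ)
      = (-1:ℝ) ^ n := by exact_mod_cast congrArg (Int.cast : ℤ → ℝ) (det (θ := θ) n)
  have R4 := neg_one_pow_sq_real n
  push_cast
  exact conj_formula R1 R2 hsq R4

lemma Qn_pos (d : ℕ) (hirr : Irrational θ) (h1 : 1 < θ) (hsq : θ ^ 2 = (d:ℝ)) (n : ℕ) :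
    0 < (-1:ℤ) ^ n * (cfP θ (n+1) ^ 2 - (d:ℤ) * cfQ θ (n+1) ^ 2) := by
  have hsgn := e_sign hirr h1 n
  have hC : (1:ℝ) ≤ (cfP θ (n+1) : ℝ) := by exact_mod_cast cfP_ge_one hirr h1 n
  have hA : (0:ℝ) ≤ (cfQ θ (n+1) : ℝ) := by exact_mod_cast cfQ_nonneg hirr h1 (n+1)
  have hfac : ((-1:ℝ) ^ n * ((cfP θ (n+1) : ℝ) ^ 2 - (d:ℝ) * (cfQ θ (n+1) : ℝ) ^ 2)) =
      ((-1:ℝ) ^ (n+1) * (θ * (cfQ θ (n+1) : ℝ) - (cfP θ (n+1) : ℝ))) *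
        ((cfP θ (n+1) : ℝ) + θ * (cfQ θ (n+1) : ℝ)) := by
    rw [pow_succ]
    linear_combination ((-1:ℝ) ^ n * (cfQ θ (n+1) : ℝ) ^ 2) * hsq
  have hpos2 : (0:ℝ) < (cfP θ (n+1) : ℝ) + θ * (cfQ θ (n+1) : ℝ) := by nlinarith
  have : (0:ℝ) < (-1:ℝ) ^ n * ((cfP θ (n+1) : ℝ) ^ 2 - (d:ℝ) * (cfQ θ (n+1) : ℝ) ^ 2) := by
    rw [hfac]; exact mul_pos hsgn hpos2
  exact_mod_cast this

lemma period_of_K_one (d : ℕ) (hirr : Irrational θ) (n : ℕ)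
    (hK : (-1:ℤ) ^ n * (cfP θ (n+1) ^ 2 - (d:ℤ) * cfQ θ (n+1) ^ 2) = 1)
    (hsq : θ ^ 2 = (d:ℝ)) :
    ∀ m, 1 ≤ m → cfA θ (m + n) = cfA θ m := by
  have hc := conj (θ := θ) d hirr hsq n
  rw [hK] at hc
  set M : ℤ := (-1:ℤ) ^ n * ((d:ℤ) * cfQ θ (n+1) * cfQ θ n - cfP θ (n+1) * cfP θ n) with hM
  have hαn : cfAlpha θ n = θ + (M : ℝ) := by
    push_cast at hc; linarith
  have hfr : Int.fract (cfAlpha θ n) = Int.fract θ := by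
    rw [hαn, Int.fract_add_intCast]
  have hstep : cfAlpha θ (n + 1) = cfAlpha θ 1 := by
    show (1:ℝ) / Int.fract (cfAlpha θ n) = 1 / Int.fract (cfAlpha θ 0)
    rw [hfr]; rfl
  intro m hm
  obtain ⟨k, rfl⟩ : ∃ k, m = 1 + k := ⟨m - 1, by omega⟩
  rw [show 1 + k + n = (n + 1) + k from by omega, cfA_shift, hstep, ← cfA_shift]


lemma unit_is_convergent (d : ℕ) (hirr : Irrational θ) (h1 : 1 < θ)
    (hsq : θ ^ 2 = (d:ℝ)) (hd2 : (2:ℤ) ≤ (d:ℤ)) (u v : ℤ) (hu : 1 ≤ u) (hv : 1 ≤ v)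
    (hpell : u ^ 2 - (d:ℤ) * v ^ 2 = 1 ∨ u ^ 2 - (d:ℤ) * v ^ 2 = -1) :
    ∃ n, 1 ≤ n ∧ cfP θ (n+1) = u ∧ cfQ θ (n+1) = v := by
  -- find the right index n
  have hex : ∃ m : ℕ, v < cfQ θ (m + 3) := by
    refine ⟨v.toNat, ?_⟩
    have h2 := cfQ_growth hirr h1 v.toNat
    have h3 : (v.toNat : ℤ) = v := Int.toNat_of_nonneg (by linarith)
    omega
  classical
  set W := Nat.find hex with hW
  set n := W + 1 with hn
  have hv' : v < cfQ θ (n + 2) := Nat.find_spec hex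
  have hQ1le : cfQ θ (n + 1) ≤ v := by
    rcases Nat.eq_zero_or_pos W with h0 | hpos
    · have : cfQ θ (n + 1) = 1 := by rw [hn, h0]; show cfA θ 0 * 0 + 1 = 1; ring
      omega
    · obtain ⟨W', hW'⟩ : ∃ W', W = W' + 1 := ⟨W - 1, by omega⟩
      have h8 := Nat.find_min hex (show W' < W from by omega)
      push_neg at h8
      rw [show n + 1 = W' + 3 from by omega]
      exact h8
  have hba := best_approx hirr h1 n u v hv hv'
  -- |θ v - u| * (u + θ v) = 1
  have hpos2 : (0:ℝ) < (u:ℝ) + θ * (v:ℝ) := by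
    have : (1:ℝ) ≤ (u:ℝ) := by exact_mod_cast hu
    have h5 : (1:ℝ) ≤ (v:ℝ) := by exact_mod_cast hv
    nlinarith
  have hprod : (θ * (v:ℝ) - (u:ℝ)) * ((u:ℝ) + θ * (v:ℝ)) = (((d:ℤ) * v ^ 2 - u ^ 2 : ℤ) : ℝ) := by
    push_cast
    linear_combination (v:ℝ) ^ 2 * hsq
  have habs : |θ * (v:ℝ) - (u:ℝ)| * ((u:ℝ) + θ * (v:ℝ)) = 1 := by
    rw [← abs_of_pos hpos2, ← abs_mul, hprod]
    rcases hpell with h | h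
    · rw [show (d:ℤ) * v ^ 2 - u ^ 2 = -1 from by linarith]; norm_num
    · rw [show (d:ℤ) * v ^ 2 - u ^ 2 = 1 from by linarith]; norm_num
  -- u ≥ v
  have huv : v ≤ u := by
    rcases hpell with h | h <;> nlinarith
  have hden : 2 * (v:ℝ) < (u:ℝ) + θ * (v:ℝ) := by
    have h5 : (1:ℝ) ≤ (v:ℝ) := by exact_mod_cast hv
    have h6 : (v:ℝ) ≤ (u:ℝ) := by exact_mod_cast huv
    nlinarith
  have habspos : 0 < |θ * (v:ℝ) - (u:ℝ)| := by nlinarith [abs_nonneg (θ * (v:ℝ) - (u:ℝ))]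
  have hQ1leR : (cfQ θ (n+1) : ℝ) ≤ (v:ℝ) := by exact_mod_cast hQ1le
  have hQ1nnR : (0:ℝ) ≤ (cfQ θ (n+1) : ℝ) := by exact_mod_cast cfQ_nonneg hirr h1 (n+1)
  have hvnnR : (0:ℝ) ≤ (v:ℝ) := by positivity
  have hkey : |(u:ℝ) * (cfQ θ (n+1) : ℝ) - (v:ℝ) * (cfP θ (n+1) : ℝ)| < 1 := by
    have hsplit : (u:ℝ) * (cfQ θ (n+1) : ℝ) - (v:ℝ) * (cfP θ (n+1) : ℝ)
        = (cfQ θ (n+1) : ℝ) * ((u:ℝ) - θ * (v:ℝ)) +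
          (v:ℝ) * (θ * (cfQ θ (n+1) : ℝ) - (cfP θ (n+1) : ℝ)) := by ring
    calc |(u:ℝ) * (cfQ θ (n+1) : ℝ) - (v:ℝ) * (cfP θ (n+1) : ℝ)|
        ≤ |(cfQ θ (n+1) : ℝ) * ((u:ℝ) - θ * (v:ℝ))| +
          |(v:ℝ) * (θ * (cfQ θ (n+1) : ℝ) - (cfP θ (n+1) : ℝ))| := by
          rw [hsplit]; exact abs_add_le _ _
      _ = (cfQ θ (n+1) : ℝ) * |θ * (v:ℝ) - (u:ℝ)| +
          (v:ℝ) * |θ * (cfQ θ (n+1) : ℝ) - (cfP θ (n+1) : ℝ)| := by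
          rw [abs_mul, abs_mul, abs_of_nonneg hQ1nnR, abs_of_nonneg hvnnR, abs_sub_comm]
      _ ≤ (v:ℝ) * |θ * (v:ℝ) - (u:ℝ)| + (v:ℝ) * |θ * (v:ℝ) - (u:ℝ)| := by
          gcongr
      _ < 1 := by nlinarith
  have hzero : u * cfQ θ (n+1) - v * cfP θ (n+1) = 0 := by
    have h7 : |u * cfQ θ (n+1) - v * cfP θ (n+1)| < 1 := by
      have : |((u * cfQ θ (n+1) - v * cfP θ (n+1) : ℤ) : ℝ)| < 1 := by push_cast; exact hkey
      exact_mod_cast this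
    rcases abs_cases (u * cfQ θ (n+1) - v * cfP θ (n+1)) with ⟨he, hs⟩ | ⟨he, hs⟩ <;> omega
  have heq : u * cfQ θ (n+1) = v * cfP θ (n+1) := by omega
  have hcop_uv : IsCoprime v u := by
    rcases hpell with h | h
    · exact ⟨-((d:ℤ) * v), u, by linear_combination h⟩
    · exact ⟨(d:ℤ) * v, -u, by linear_combination -h⟩
  have hcop_qp : IsCoprime (cfQ θ (n+1)) (cfP θ (n+1)) := by
    refine ⟨-((-1:ℤ) ^ n * cfP θ n), (-1:ℤ) ^ n * cfQ θ n, ?_⟩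
    linear_combination ((-1:ℤ) ^ n) * det (θ := θ) n + neg_one_pow_mul_self n
  have hdvd1 : v ∣ cfQ θ (n+1) := by
    refine hcop_uv.dvd_of_dvd_mul_left ?_
    exact ⟨cfP θ (n+1), by linarith [heq]⟩
  have hdvd2 : cfQ θ (n+1) ∣ v := by
    refine hcop_qp.dvd_of_dvd_mul_left ?_
    exact ⟨u, by linarith [heq]⟩
  have hveq : cfQ θ (n+1) = v :=
    Int.dvd_antisymm (by linarith [cfQ_nonneg hirr h1 (n+1)]) (by linarith) hdvd2 hdvd1
  have hueq : cfP θ (n+1) = u := by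
    have hQne : cfQ θ (n+1) ≠ 0 := by
      rw [hveq]; omega
    have : cfP θ (n+1) * cfQ θ (n+1) = u * cfQ θ (n+1) := by
      rw [heq, hveq]; ring
    exact mul_right_cancel₀ hQne this
  exact ⟨n, by omega, hueq, hveq⟩

end CFaux

/-- for a positive non-square integer `d` with minimal period `l` of the
continued fraction of `√d` and `(l-1)`-th convergent `p_{l-1}/q_{l-1}` (note
`p_{l-1} = cfP (√d) (l+1)`, `q_{l-1} = cfQ (√d) (l+1)`), the number
`ε = p_{l-1} + q_{l-1}√d` satisfies `|p_{l-1}² - d q_{l-1}²| = 1`, `ε > 1`, and `ε` is the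
fundamental unit of `ℤ[√d]`: any `u + v√d > 1` with `|u² - d v²| = 1` satisfies
`u + v√d ≥ ε`. -/
theorem stmt_4 (d : ℕ) (hd : 0 < d) (hns : ¬ IsSquare d) (l : ℕ)
    (hl : IsLeast {p : ℕ | 0 < p ∧ ∀ n, 1 ≤ n →
      cfA (Real.sqrt d) (n + p) = cfA (Real.sqrt d) n} l) :
    |cfP (Real.sqrt d) (l + 1) ^ 2 - (d : ℤ) * cfQ (Real.sqrt d) (l + 1) ^ 2| = 1 ∧
    1 < (cfP (Real.sqrt d) (l + 1) : ℝ) + (cfQ (Real.sqrt d) (l + 1) : ℝ) * Real.sqrt d ∧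
    ∀ u v : ℤ, |u ^ 2 - (d : ℤ) * v ^ 2| = 1 →
      1 < (u : ℝ) + (v : ℝ) * Real.sqrt d →
      (cfP (Real.sqrt d) (l + 1) : ℝ) + (cfQ (Real.sqrt d) (l + 1) : ℝ) * Real.sqrt d ≤
        (u : ℝ) + (v : ℝ) * Real.sqrt d := by
  set θ : ℝ := Real.sqrt d with hθdef
  have hirr : Irrational θ := irrational_sqrt_natCast_iff.mpr hns
  have hd2 : 2 ≤ d := by
    have : d ≠ 1 := fun h => hns (h ▸ IsSquare.one)
    omega
  have hdR : (2:ℝ) ≤ (d:ℝ) := by exact_mod_cast hd2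
  have hsq : θ ^ 2 = (d:ℝ) := Real.sq_sqrt (by positivity)
  have h1 : 1 < θ := by nlinarith [Real.sqrt_nonneg (d:ℝ)]
  have hθpos : (0:ℝ) < θ := by linarith
  obtain ⟨⟨hlpos, hper⟩, hleast⟩ := hl
  -- the period gives `α_{l+1} = α_1`
  have hireq : cfAlpha θ (1 + l) = cfAlpha θ 1 := by
    apply CFaux.cf_unique (CFaux.alpha_irrational hirr _) (CFaux.alpha_irrational hirr _)
      (CFaux.alpha_gt_one hirr h1 _) (CFaux.alpha_gt_one hirr h1 _)
    intro k
    rw [← CFaux.cfA_shift, ← CFaux.cfA_shift, show 1 + l + k = (1 + k) + l from by omega]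
    exact hper (1 + k) (by omega)
  have h1l : cfAlpha θ (l + 1) = cfAlpha θ 1 := by rw [Nat.add_comm]; exact hireq
  have hm1 := CFaux.alpha_succ_mul hirr l
  have hm0 := CFaux.alpha_succ_mul hirr 0
  rw [h1l] at hm1
  have hα1ne : cfAlpha θ 1 ≠ 0 := by
    have := CFaux.alpha_gt_one hirr h1 1; linarith
  have hsub : cfAlpha θ l - (cfA θ l : ℝ) = cfAlpha θ 0 - (cfA θ 0 : ℝ) :=
    mul_left_cancel₀ hα1ne (by rw [hm1, hm0])
  have h00 : cfAlpha θ 0 = θ := rfl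
  have hαl : cfAlpha θ l = θ + ((cfA θ l - cfA θ 0 : ℤ) : ℝ) := by
    rw [h00] at hsub; push_cast; linarith
  have hc := CFaux.conj (θ := θ) d hirr hsq l
  set K : ℤ := (-1:ℤ) ^ l * (cfP θ (l+1) ^ 2 - (d:ℤ) * cfQ θ (l+1) ^ 2) with hKdef
  set M : ℤ := (-1:ℤ) ^ l * ((d:ℤ) * cfQ θ (l+1) * cfQ θ l - cfP θ (l+1) * cfP θ l) with hMdef
  set c : ℤ := cfA θ l - cfA θ 0 with hcdef
  have hKeq : K = 1 := by
    by_contra hKne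
    have hlin : θ * ((K:ℝ) - 1) = ((M - c * K : ℤ) : ℝ) := by
      rw [hαl] at hc
      push_cast at hc ⊢
      linarith
    have hKne' : ((K - 1 : ℤ) : ℝ) ≠ 0 := by
      intro h
      apply hKne
      have h2 : (K:ℝ) = 1 := by push_cast at h; linarith
      exact_mod_cast h2
    have hrat : θ = ((M - c * K : ℤ) : ℝ) / ((K - 1 : ℤ) : ℝ) := by
      rw [eq_div_iff hKne']
      push_cast at hlin ⊢
      linarith
    exact ((irrational_iff_ne_rational θ).mp hirr (M - c * K) (K - 1) (fun h => hKne' (by rw [h]; simp))) hrat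
  refine ⟨?_, ?_, ?_⟩
  · have h3 : |K| = 1 := by rw [hKeq]; rfl
    rwa [hKdef, abs_mul, abs_pow, abs_neg, abs_one, one_pow, one_mul] at h3
  · have hP := CFaux.cfP_ge_one hirr h1 l
    have hQ : 1 ≤ cfQ θ (l + 1) := by
      obtain ⟨l', rfl⟩ : ∃ l', l = l' + 1 := ⟨l - 1, by omega⟩
      exact CFaux.cfQ_ge_one hirr h1 l'
    have hPR : (1:ℝ) ≤ (cfP θ (l+1) : ℝ) := by exact_mod_cast hP
    have hQR : (1:ℝ) ≤ (cfQ θ (l+1) : ℝ) := by exact_mod_cast hQ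
    nlinarith
  · intro u v hpell hgt
    have hpos2 : (0:ℝ) < (u:ℝ) + (v:ℝ) * θ := lt_trans one_pos hgt
    have hpell' : u ^ 2 - (d:ℤ) * v ^ 2 = 1 ∨ u ^ 2 - (d:ℤ) * v ^ 2 = -1 :=
      (abs_eq (by norm_num)).mp hpell
    have hprod : ((u:ℝ) - (v:ℝ) * θ) * ((u:ℝ) + (v:ℝ) * θ)
        = ((u ^ 2 - (d:ℤ) * v ^ 2 : ℤ) : ℝ) := by
      push_cast
      linear_combination (-(v:ℝ) ^ 2) * hsq
    have habs : |(u:ℝ) - (v:ℝ) * θ| * ((u:ℝ) + (v:ℝ) * θ) = 1 := by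
      rw [← abs_of_pos hpos2, ← abs_mul, hprod]
      rcases hpell' with h | h <;> rw [h] <;> norm_num
    have hlt : |(u:ℝ) - (v:ℝ) * θ| < 1 := by
      nlinarith [abs_nonneg ((u:ℝ) - (v:ℝ) * θ)]
    have hlt' := abs_lt.mp hlt
    have hu1 : 1 ≤ u := by
      have h2 : (0:ℝ) < (u:ℝ) := by linarith
      have h3 : (0:ℤ) < u := by exact_mod_cast h2
      omega
    have hv1 : 1 ≤ v := by
      have hvθ : (0:ℝ) < (v:ℝ) * θ := by linarith
      have h2 : (0:ℝ) < (v:ℝ) := by nlinarith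
      have h3 : (0:ℤ) < v := by exact_mod_cast h2
      omega
    obtain ⟨n, hn1, hueq, hveq⟩ := CFaux.unit_is_convergent d hirr h1 hsq
      (by exact_mod_cast hd2) u v hu1 hv1 hpell'
    have hKn_pos := CFaux.Qn_pos d hirr h1 hsq n
    have hK1 : (-1:ℤ) ^ n * (cfP θ (n+1) ^ 2 - (d:ℤ) * cfQ θ (n+1) ^ 2) = 1 := by
      have hX : (cfP θ (n+1) ^ 2 - (d:ℤ) * cfQ θ (n+1) ^ 2) = 1 ∨
          (cfP θ (n+1) ^ 2 - (d:ℤ) * cfQ θ (n+1) ^ 2) = -1 := by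
        rw [hueq, hveq]; exact hpell'
      rcases Nat.even_or_odd n with hp | hp
      · rw [Even.neg_one_pow hp] at hKn_pos ⊢
        rcases hX with h | h
        · rw [h]; norm_num
        · rw [h] at hKn_pos; norm_num at hKn_pos
      · rw [Odd.neg_one_pow hp] at hKn_pos ⊢
        rcases hX with h | h
        · rw [h] at hKn_pos; norm_num at hKn_pos
        · rw [h]; norm_num
    have hperiod := CFaux.period_of_K_one (θ := θ) d hirr n hK1 hsq
    have hln : l ≤ n := hleast ⟨by omega, hperiod⟩
    have hPm : cfP θ (l+1) ≤ cfP θ (n+1) := CFaux.cfP_mono hirr h1 hln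
    have hQm : cfQ θ (l+1) ≤ cfQ θ (n+1) := CFaux.cfQ_mono hirr h1 hln
    have hPmR : (cfP θ (l+1) : ℝ) ≤ (u:ℝ) := by
      rw [← hueq]; exact_mod_cast hPm
    have hQmR : (cfQ θ (l+1) : ℝ) ≤ (v:ℝ) := by
      rw [← hveq]; exact_mod_cast hQm
    have hfin := mul_le_mul_of_nonneg_right hQmR (le_of_lt hθpos)
    linarith
end

section
/- Let d be a positive non-square integer, let √d = [a_0; a_1, a_2, …] be its simple continued fraction expansion with minimal period l and convergents p_n/q_n. Then for every n ≥ 0, |p_n² − d·q_n²| = 1 if and only if n + 1 is a multiple of l. -/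
lemma cfAlpha_succ (θ : ℝ) (n : ℕ) : cfAlpha θ (n+1) = 1 / Int.fract (cfAlpha θ n) := rfl

lemma stmt6_irr_fract {x : ℝ} (hx : Irrational x) : Irrational (Int.fract x) :=
  hx.sub_intCast _

lemma stmt6_fract_pos {x : ℝ} (hx : Irrational x) : 0 < Int.fract x := by
  rcases lt_or_eq_of_le (Int.fract_nonneg x) with h | h
  · exact h
  · exact absurd (h ▸ (stmt6_irr_fract hx)) (by simpa using not_irrational_zero)

lemma stmt6_irr_alpha {x : ℝ} (hx : Irrational x) : ∀ n, Irrational (cfAlpha x n)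
  | 0 => hx
  | n + 1 => by
    rw [cfAlpha_succ, one_div]
    exact (stmt6_irr_fract (stmt6_irr_alpha hx n)).inv

lemma stmt6_alpha_gt_one {x : ℝ} (hx : Irrational x) (n : ℕ) : 1 < cfAlpha x (n+1) := by
  rw [cfAlpha_succ]
  have h0 := stmt6_fract_pos (stmt6_irr_alpha hx n)
  have h1 := Int.fract_lt_one (cfAlpha x n)
  exact (one_lt_div h0).mpr h1

lemma stmt6_a_ge_one {x : ℝ} (hx : Irrational x) (n : ℕ) : 1 ≤ cfA x (n+1) :=
  Int.le_floor.mpr (by exact_mod_cast (stmt6_alpha_gt_one hx n).le)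

lemma stmt6_alpha_add (x : ℝ) (m : ℕ) : ∀ n, cfAlpha x (m + n) = cfAlpha (cfAlpha x m) n
  | 0 => rfl
  | n + 1 => by
    rw [← Nat.add_assoc, cfAlpha_succ, stmt6_alpha_add x m n, cfAlpha_succ]

lemma stmt6_keyI {x : ℝ} (hx : Irrational x) :
    ∀ n, x * (cfAlpha x n * cfQ x (n+1) + cfQ x n) = cfAlpha x n * cfP x (n+1) + cfP x n
  | 0 => by simp [cfP, cfQ, cfAlpha]
  | n + 1 => by
    have IH := stmt6_keyI hx n
    have hf : Int.fract (cfAlpha x n) ≠ 0 := ne_of_gt (stmt6_fract_pos (stmt6_irr_alpha hx n))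
    have hαn : cfAlpha x n = (cfA x n : ℝ) + Int.fract (cfAlpha x n) := by
      rw [cfA]; exact (Int.floor_add_fract _).symm
    rw [hαn] at IH
    rw [cfAlpha_succ, show cfP x (n+2) = cfA x n * cfP x (n + 1) + cfP x n from rfl,
      show cfQ x (n+2) = cfA x n * cfQ x (n + 1) + cfQ x n from rfl]
    push_cast at IH ⊢
    field_simp
    linear_combination IH

lemma stmt6_det (x : ℝ) : ∀ n, cfP x (n+1) * cfQ x n - cfP x n * cfQ x (n+1) = (-1)^n
  | 0 => by simp [cfP, cfQ]
  | n + 1 => by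
    have IH := stmt6_det x n
    rw [show cfP x (n+2) = cfA x n * cfP x (n + 1) + cfP x n from rfl,
      show cfQ x (n+2) = cfA x n * cfQ x (n + 1) + cfQ x n from rfl, pow_succ]
    linear_combination (-1 : ℤ) * IH

lemma stmt6_a0_ge_one {x : ℝ} (hx1 : 1 < x) : 1 ≤ cfA x 0 := by
  rw [cfA]
  exact Int.le_floor.mpr (by exact_mod_cast hx1.le)

lemma stmt6_a_ge_one' {x : ℝ} (hx : Irrational x) (hx1 : 1 < x) (n : ℕ) : 1 ≤ cfA x n := by
  cases n with
  | zero => exact stmt6_a0_ge_one hx1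
  | succ n => exact stmt6_a_ge_one hx n

lemma stmt6_Q_ge {x : ℝ} (hx : Irrational x) (hx1 : 1 < x) (n : ℕ) :
    ((n : ℤ) ≤ cfQ x (n+2) ∧ 1 ≤ cfQ x (n+2)) ∧
      ((n : ℤ) + 1 ≤ cfQ x (n+3) ∧ 1 ≤ cfQ x (n+3)) := by
  induction n with
  | zero =>
    have h0 := stmt6_a_ge_one' hx hx1 0
    have h1 := stmt6_a_ge_one' hx hx1 1
    have e2 : cfQ x 2 = cfA x 0 * cfQ x 1 + cfQ x 0 := rfl
    have e3 : cfQ x 3 = cfA x 1 * cfQ x 2 + cfQ x 1 := rfl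
    have e1 : cfQ x 1 = 0 := rfl
    have e0 : cfQ x 0 = 1 := rfl
    constructor
    · constructor <;> (rw [e2, e0, e1]; omega)
    · rw [e3, e2, e0, e1]
      constructor <;> (push_cast; nlinarith)
  | succ n IH =>
    obtain ⟨IH1, IH2⟩ := IH
    refine ⟨IH2, ?_⟩
    have ha := stmt6_a_ge_one' hx hx1 (n+2)
    have e : cfQ x (n+4) = cfA x (n+2) * cfQ x (n+3) + cfQ x (n+2) := rfl
    constructor
    · rw [show n+1+3 = n+4 from rfl, e]; push_cast; nlinarith [IH1.1, IH1.2, IH2.1, IH2.2]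
    · rw [show n+1+3 = n+4 from rfl, e]; nlinarith [IH1.2, IH2.2]

lemma stmt6_Q_nonneg {x : ℝ} (hx : Irrational x) (hx1 : 1 < x) : ∀ n, 0 ≤ cfQ x n
  | 0 => by norm_num [cfQ]
  | 1 => by norm_num [cfQ]
  | n + 2 => by have := (stmt6_Q_ge hx hx1 n).1.2; omega

lemma stmt6_alpha_pos {x : ℝ} (hx : Irrational x) (hx1 : 1 < x) (n : ℕ) : 1 < cfAlpha x n := by
  cases n with
  | zero => exact hx1
  | succ n => exact stmt6_alpha_gt_one hx n

/-- `|x q_n - p_n| * q_n ≤ 1`. -/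
lemma stmt6_bound {x : ℝ} (hx : Irrational x) (hx1 : 1 < x) (n : ℕ) :
    |x * cfQ x (n+1) - cfP x (n+1)| * cfQ x (n+1) ≤ 1 := by
  have hI := stmt6_keyI hx n
  have hα := stmt6_alpha_pos hx hx1 n
  have hQ' : (0:ℝ) ≤ cfQ x (n+1) := by exact_mod_cast stmt6_Q_nonneg hx hx1 (n+1)
  have hQ : (0:ℝ) ≤ cfQ x n := by exact_mod_cast stmt6_Q_nonneg hx hx1 n
  have hDQ : (cfQ x (n+1) : ℝ) ≤ cfAlpha x n * cfQ x (n+1) + cfQ x n := by nlinarith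
  have hdet : (cfP x (n+1) : ℝ) * cfQ x n - cfP x n * cfQ x (n+1) = (-1)^n := by
    exact_mod_cast congrArg (Int.cast : ℤ → ℝ) (stmt6_det x n)
  have key : (x * cfQ x (n+1) - cfP x (n+1)) * (cfAlpha x n * cfQ x (n+1) + cfQ x n)
      = -(-1)^n := by
    linear_combination (cfQ x (n+1) : ℝ) * hI - hdet
  have hDpos : (0:ℝ) < cfAlpha x n * cfQ x (n+1) + cfQ x n := by
    rcases Nat.eq_zero_or_pos n with rfl | hn
    · have h1 : cfQ x 1 = 0 := rfl
      have h0 : cfQ x 0 = 1 := rfl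
      rw [h1, h0]; push_cast; nlinarith
    · obtain ⟨m, rfl⟩ := Nat.exists_eq_add_of_le hn
      have h1 : (1:ℤ) ≤ cfQ x (1 + m + 1) := by
        have := (stmt6_Q_ge hx hx1 m).1.2
        convert this using 2
        omega
      have h1' : (1:ℝ) ≤ cfQ x (1 + m + 1) := by exact_mod_cast h1
      nlinarith
  have habs : |x * cfQ x (n+1) - cfP x (n+1)| * (cfAlpha x n * cfQ x (n+1) + cfQ x n) = 1 := by
    rw [← abs_of_pos hDpos, ← abs_mul, key]
    simp [abs_pow]
  calc |x * cfQ x (n+1) - cfP x (n+1)| * cfQ x (n+1)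
      ≤ |x * cfQ x (n+1) - cfP x (n+1)| * (cfAlpha x n * cfQ x (n+1) + cfQ x n) :=
        mul_le_mul_of_nonneg_left hDQ (abs_nonneg _)
    _ = 1 := habs

lemma stmt6_PQ_congr {x y : ℝ} (h : ∀ n, cfA x n = cfA y n) :
    ∀ n, cfP x n = cfP y n ∧ cfQ x n = cfQ y n
  | 0 => by constructor <;> rfl
  | 1 => by constructor <;> rfl
  | n + 2 => by
    obtain ⟨hp1, hq1⟩ := stmt6_PQ_congr h (n+1)
    obtain ⟨hp0, hq0⟩ := stmt6_PQ_congr h n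
    constructor
    · show cfA x n * cfP x (n + 1) + cfP x n = cfA y n * cfP y (n + 1) + cfP y n
      rw [h, hp1, hp0]
    · show cfA x n * cfQ x (n + 1) + cfQ x n = cfA y n * cfQ y (n + 1) + cfQ y n
      rw [h, hq1, hq0]

lemma stmt6_cf_unique {x y : ℝ} (hx : Irrational x) (hy : Irrational y)
    (hx1 : 1 < x) (hy1 : 1 < y) (h : ∀ n, cfA x n = cfA y n) : x = y := by
  by_contra hne
  have hpos : 0 < |x - y| := abs_pos.mpr (sub_ne_zero.mpr hne)
  obtain ⟨m, hm⟩ := exists_nat_gt (2 / |x - y|)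
  have hm0 : (0:ℝ) < m := lt_of_le_of_lt (by positivity : (0:ℝ) ≤ 2/|x-y|) hm
  have hm1 : (1:ℝ) ≤ m := by
    have : 0 < m := by exact_mod_cast hm0
    exact_mod_cast this
  -- use n := m + 1, so that q = cfQ x (m+3) ≥ m + 1 ≥ m
  have hQge : (m : ℤ) + 1 ≤ cfQ x (m+3) := (stmt6_Q_ge hx hx1 m).2.1
  have hQge' : (m : ℝ) ≤ cfQ x (m+3) := by
    have : ((m : ℤ) : ℝ) + 1 ≤ ((cfQ x (m+3) : ℤ) : ℝ) := by exact_mod_cast hQge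
    push_cast at this ⊢; linarith
  have hb1 := stmt6_bound hx hx1 (m+2)
  have hb2 := stmt6_bound hy hy1 (m+2)
  rw [← (stmt6_PQ_congr h (m+3)).1, ← (stmt6_PQ_congr h (m+3)).2] at hb2
  have hQpos : (0:ℝ) < cfQ x (m+3) := lt_of_lt_of_le (by linarith) hQge'
  -- |x - y| * q² ≤ 2
  have key : |x - y| * (cfQ x (m+3) : ℝ) * (cfQ x (m+3) : ℝ) ≤ 2 := by
    have : |x - y| * (cfQ x (m+3) : ℝ)
        ≤ |x * cfQ x (m+3) - cfP x (m+3)| + |y * cfQ x (m+3) - cfP x (m+3)| := by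
      have := abs_sub (x * cfQ x (m+3) - cfP x (m+3)) (y * cfQ x (m+3) - cfP x (m+3))
      calc |x - y| * (cfQ x (m+3) : ℝ) = |(x - y) * cfQ x (m+3)| := by
            rw [abs_mul, abs_of_pos hQpos]
        _ = |(x * cfQ x (m+3) - cfP x (m+3)) - (y * cfQ x (m+3) - cfP x (m+3))| := by
            ring_nf
        _ ≤ _ := abs_sub _ _
    nlinarith [abs_nonneg (x * cfQ x (m+3) - cfP x (m+3)),
      abs_nonneg (y * cfQ x (m+3) - cfP x (m+3))]
  have : 2 < |x - y| * (m : ℝ) := by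
    rw [div_lt_iff₀ hpos] at hm; linarith [mul_comm |x - y| (m:ℝ)]
  nlinarith [mul_le_mul_of_nonneg_left hQge' (abs_nonneg (x - y))]

/-- `(m_n, s_n)` with `α_n = (m_n + √d)/s_n`. -/
noncomputable def stmt6_ms (d : ℕ) : ℕ → ℤ × ℤ
  | 0 => (0, 1)
  | n + 1 =>
    let p := stmt6_ms d n
    let m' := cfA (Real.sqrt d) n * p.2 - p.1
    (m', ((d : ℤ) - m' ^ 2) / p.2)

section SqrtD

variable {d : ℕ}

lemma stmt6_d2 (hd : 0 < d) (hns : ¬ IsSquare d) : 2 ≤ d := by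
  rcases Nat.lt_or_ge d 2 with h | h
  · have : d = 1 := by omega
    subst this
    exact absurd ⟨1, rfl⟩ hns
  · exact h

lemma stmt6_irr_sqrt (hns : ¬ IsSquare d) : Irrational (Real.sqrt d) :=
  irrational_sqrt_natCast_iff.mpr hns

lemma stmt6_sqrt_gt_one (hd : 0 < d) (hns : ¬ IsSquare d) : 1 < Real.sqrt d := by
  have h2 : (2:ℝ) ≤ d := by exact_mod_cast stmt6_d2 hd hns
  nlinarith [Real.sq_sqrt (by positivity : (0:ℝ) ≤ (d:ℝ)), Real.sqrt_nonneg (d:ℝ)]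

lemma stmt6_sq_sqrt (d : ℕ) : Real.sqrt d * Real.sqrt d = d :=
  Real.mul_self_sqrt (by positivity)

lemma stmt6_ms_ne_sq (hns : ¬ IsSquare d) (m : ℤ) : (d:ℤ) - m^2 ≠ 0 := by
  intro h
  exact hns ⟨m.natAbs, by have : (d:ℤ) = m^2 := by linarith
                          have := congrArg Int.natAbs this
                          simpa [Int.natAbs_pow, ← Int.natAbs_mul, sq, mul_comm] using this⟩

lemma stmt6_ms_fst (d : ℕ) (n : ℕ) :
    (stmt6_ms d (n+1)).1 = cfA (Real.sqrt d) n * (stmt6_ms d n).2 - (stmt6_ms d n).1 := rfl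

lemma stmt6_ms_snd (d : ℕ) (n : ℕ) :
    (stmt6_ms d (n+1)).2 = ((d:ℤ) - (stmt6_ms d (n+1)).1 ^ 2) / (stmt6_ms d n).2 := rfl

/-- Main invariant for the surd algorithm. -/
lemma stmt6_inv (hd : 0 < d) (hns : ¬ IsSquare d) :
    ∀ n, (stmt6_ms d n).2 ≠ 0 ∧ ((stmt6_ms d n).2 ∣ (d:ℤ) - (stmt6_ms d n).1 ^ 2) ∧
      cfAlpha (Real.sqrt d) n * (stmt6_ms d n).2 = (stmt6_ms d n).1 + Real.sqrt d
  | 0 => by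
    have h0 : stmt6_ms d 0 = (0, 1) := rfl
    rw [h0]
    exact ⟨one_ne_zero, ⟨(d:ℤ), by ring⟩, by simp [cfAlpha]⟩
  | n + 1 => by
    obtain ⟨hs0, hdvd, hα⟩ := stmt6_inv hd hns n
    have hdvd' : (stmt6_ms d n).2 ∣ (d:ℤ) - (stmt6_ms d (n+1)).1 ^ 2 := by
      have : (d:ℤ) - (stmt6_ms d (n+1)).1 ^ 2 = ((d:ℤ) - (stmt6_ms d n).1 ^ 2) +
          (stmt6_ms d n).2 * (cfA (Real.sqrt d) n *
            ((stmt6_ms d n).1 - (stmt6_ms d (n+1)).1)) := by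
        rw [stmt6_ms_fst]; ring
      rw [this]
      exact dvd_add hdvd (Dvd.intro _ rfl)
    have hss : (stmt6_ms d n).2 * (stmt6_ms d (n+1)).2 = (d:ℤ) - (stmt6_ms d (n+1)).1 ^ 2 := by
      rw [stmt6_ms_snd]; exact Int.mul_ediv_cancel' hdvd'
    have hsne : (stmt6_ms d (n+1)).2 ≠ 0 := by
      intro h0
      rw [h0, mul_zero] at hss
      exact stmt6_ms_ne_sq hns _ hss.symm
    refine ⟨hsne, ⟨(stmt6_ms d n).2, by rw [← hss]; ring⟩, ?_⟩
    -- α_{n+1} * s' = m' + √d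
    have hirr := stmt6_irr_sqrt hns
    have hne : Real.sqrt d - ((stmt6_ms d (n+1)).1 : ℝ) ≠ 0 :=
      sub_ne_zero.mpr (hirr.ne_int _)
    have hsR : ((stmt6_ms d n).2 : ℝ) ≠ 0 := by exact_mod_cast hs0
    have hfr : Int.fract (cfAlpha (Real.sqrt d) n)
        = (Real.sqrt d - ((stmt6_ms d (n+1)).1 : ℝ)) / (stmt6_ms d n).2 := by
      rw [Int.fract, eq_div_iff hsR, stmt6_ms_fst]
      have hfl : (⌊cfAlpha (Real.sqrt d) n⌋ : ℝ) = (cfA (Real.sqrt d) n : ℝ) := by rw [cfA]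
      rw [hfl]
      push_cast
      linear_combination hα
    rw [cfAlpha_succ, hfr, one_div_div, div_mul_eq_mul_div, div_eq_iff hne]
    have hssR : ((stmt6_ms d n).2 : ℝ) * ((stmt6_ms d (n+1)).2 : ℝ)
        = (d:ℝ) - ((stmt6_ms d (n+1)).1 : ℝ)^2 := by exact_mod_cast hss
    linear_combination hssR - stmt6_sq_sqrt d

end SqrtD

section SqrtD2

variable {d : ℕ}

lemma stmt6_a0_lt (hd : 0 < d) (hns : ¬ IsSquare d) :
    (cfA (Real.sqrt d) 0 : ℝ) < Real.sqrt d ∧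
      Real.sqrt d < (cfA (Real.sqrt d) 0 : ℝ) + 1 ∧ 1 ≤ cfA (Real.sqrt d) 0 := by
  have hirr := stmt6_irr_sqrt hns
  have h1 := stmt6_sqrt_gt_one hd hns
  have hfl : (⌊Real.sqrt d⌋ : ℝ) ≠ Real.sqrt d := fun h => hirr ⟨(⌊Real.sqrt d⌋ : ℚ), by
    push_cast; exact h⟩
  have hA0 : cfA (Real.sqrt d) 0 = ⌊Real.sqrt d⌋ := rfl
  refine ⟨?_, ?_, ?_⟩
  · rw [hA0]; exact lt_of_le_of_ne (Int.floor_le _) hfl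
  · rw [hA0]; push_cast; exact Int.lt_floor_add_one _
  · rw [hA0]; exact Int.le_floor.mpr (by exact_mod_cast h1.le)

lemma stmt6_ms_one (d : ℕ) : (stmt6_ms d 1).1 = cfA (Real.sqrt d) 0 ∧
    (stmt6_ms d 1).2 = (d:ℤ) - (cfA (Real.sqrt d) 0)^2 := by
  constructor
  · rw [stmt6_ms_fst]
    norm_num [stmt6_ms]
  · rw [stmt6_ms_snd, stmt6_ms_fst]
    norm_num [stmt6_ms]

/-- The conjugate `(m_n - √d)/s_n` lies in `(-1, 0)` for `n ≥ 1`. -/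
lemma stmt6_conj (hd : 0 < d) (hns : ¬ IsSquare d) :
    ∀ n, 1 ≤ n → -1 < (((stmt6_ms d n).1 : ℝ) - Real.sqrt d) / (stmt6_ms d n).2 ∧
      (((stmt6_ms d n).1 : ℝ) - Real.sqrt d) / (stmt6_ms d n).2 < 0 := by
  intro n hn
  induction n, hn using Nat.le_induction with
  | base =>
    obtain ⟨hm1, hs1⟩ := stmt6_ms_one d
    obtain ⟨ha1, ha2, ha3⟩ := stmt6_a0_lt hd hns
    have h1 := stmt6_sqrt_gt_one hd hns
    have hsq := stmt6_sq_sqrt d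
    have hspos : (0:ℝ) < ((stmt6_ms d 1).2 : ℝ) := by
      rw [hs1]; push_cast; nlinarith
    rw [hm1, hs1]
    push_cast
    rw [hs1] at hspos; push_cast at hspos
    constructor
    · rw [lt_div_iff₀ hspos]; nlinarith
    · apply div_neg_of_neg_of_pos _ hspos
      linarith
  | succ n hn IH =>
    obtain ⟨hs0, hdvd, hα⟩ := stmt6_inv hd hns n
    obtain ⟨hs0', hdvd', hα'⟩ := stmt6_inv hd hns (n+1)
    have hirr := stmt6_irr_sqrt hns
    have ha : 1 ≤ cfA (Real.sqrt d) n := by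
      obtain ⟨k, rfl⟩ := Nat.exists_eq_add_of_le hn
      rw [Nat.add_comm]
      exact stmt6_a_ge_one hirr k
    have haR : (1:ℝ) ≤ (cfA (Real.sqrt d) n : ℝ) := by exact_mod_cast ha
    have hsR : ((stmt6_ms d n).2 : ℝ) ≠ 0 := by exact_mod_cast hs0
    have hsR' : ((stmt6_ms d (n+1)).2 : ℝ) ≠ 0 := by exact_mod_cast hs0'
    have hss : (stmt6_ms d n).2 * (stmt6_ms d (n+1)).2 = (d:ℤ) - (stmt6_ms d (n+1)).1 ^ 2 := by
      rw [stmt6_ms_snd]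
      refine Int.mul_ediv_cancel' ?_
      have h2 : (d:ℤ) - (stmt6_ms d (n+1)).1 ^ 2 = ((d:ℤ) - (stmt6_ms d n).1 ^ 2) +
          (stmt6_ms d n).2 * (cfA (Real.sqrt d) n *
            ((stmt6_ms d n).1 - (stmt6_ms d (n+1)).1)) := by
        rw [stmt6_ms_fst]; ring
      rw [h2]
      exact dvd_add hdvd (Dvd.intro _ rfl)
    have hssR : ((stmt6_ms d n).2 : ℝ) * ((stmt6_ms d (n+1)).2 : ℝ)
        = (d:ℝ) - ((stmt6_ms d (n+1)).1 : ℝ)^2 := by exact_mod_cast hss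
    have hm'R : ((stmt6_ms d (n+1)).1 : ℝ)
        = (cfA (Real.sqrt d) n : ℝ) * ((stmt6_ms d n).2 : ℝ) - ((stmt6_ms d n).1 : ℝ) := by
      exact_mod_cast congrArg (Int.cast : ℤ → ℝ) (stmt6_ms_fst d n)
    -- c' = 1 / (c - a)
    set c : ℝ := (((stmt6_ms d n).1 : ℝ) - Real.sqrt d) / (stmt6_ms d n).2 with hc
    have hcs : c * (stmt6_ms d n).2 = ((stmt6_ms d n).1 : ℝ) - Real.sqrt d :=
      div_mul_cancel₀ _ hsR
    have hca : c - (cfA (Real.sqrt d) n : ℝ) < -1 := by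
      obtain ⟨IH1, IH2⟩ := IH
      linarith
    have hcane : c - (cfA (Real.sqrt d) n : ℝ) ≠ 0 := by linarith
    have hne2 : -((stmt6_ms d (n+1)).1 : ℝ) - Real.sqrt d ≠ 0 := by
      intro h0
      exact (stmt6_irr_sqrt hns).ne_int (-(stmt6_ms d (n+1)).1) (by push_cast; linarith)
    have hca_eq : c - (cfA (Real.sqrt d) n : ℝ)
        = (-((stmt6_ms d (n+1)).1 : ℝ) - Real.sqrt d) / (stmt6_ms d n).2 := by
      rw [eq_div_iff hsR, sub_mul, hcs, hm'R]; ring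
    have hc' : (((stmt6_ms d (n+1)).1 : ℝ) - Real.sqrt d) / (stmt6_ms d (n+1)).2
        = 1 / (c - (cfA (Real.sqrt d) n : ℝ)) := by
      rw [hca_eq, one_div_div, div_eq_div_iff hsR' hne2]
      linear_combination -hssR + stmt6_sq_sqrt d
    rw [hc']
    have ht : (0:ℝ) < -(c - (cfA (Real.sqrt d) n : ℝ)) := by linarith
    constructor
    · rw [neg_lt, ← one_div_neg_eq_neg_one_div]
      exact (div_lt_one (by linarith)).mpr (by linarith)
    · exact div_neg_of_pos_of_neg one_pos (by linarith)
  
end SqrtD2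

section SqrtD3

variable {d : ℕ}

lemma stmt6_s_pos (hd : 0 < d) (hns : ¬ IsSquare d) {n : ℕ} (hn : 1 ≤ n) :
    0 < (stmt6_ms d n).2 := by
  obtain ⟨hs0, -, hα⟩ := stmt6_inv hd hns n
  obtain ⟨hc1, hc2⟩ := stmt6_conj hd hns n hn
  have hirr := stmt6_irr_sqrt hns
  have hsR : ((stmt6_ms d n).2 : ℝ) ≠ 0 := by exact_mod_cast hs0
  have hcs : (((stmt6_ms d n).1 : ℝ) - Real.sqrt d) / (stmt6_ms d n).2 * (stmt6_ms d n).2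
      = ((stmt6_ms d n).1 : ℝ) - Real.sqrt d := div_mul_cancel₀ _ hsR
  have hα1 : 1 < cfAlpha (Real.sqrt d) n :=
    stmt6_alpha_pos hirr (stmt6_sqrt_gt_one hd hns) n
  have hsqrt : 0 < Real.sqrt d := by
    have := stmt6_sqrt_gt_one hd hns; linarith
  -- (α - c) * s = 2√d > 0, α - c > 0 ⟹ s > 0
  by_contra hle
  push_neg at hle
  have hslt : ((stmt6_ms d n).2 : ℝ) < 0 := by
    rcases lt_or_eq_of_le hle with h | h
    · exact_mod_cast h
    · exact absurd h hs0
  nlinarith [hα, hcs]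

/-- The Pell-type identity `p_{n-1}² - d q_{n-1}² = (-1)^n s_n`. -/
lemma stmt6_pell (hd : 0 < d) (hns : ¬ IsSquare d) (n : ℕ) :
    cfP (Real.sqrt d) (n+1) ^ 2 - (d:ℤ) * cfQ (Real.sqrt d) (n+1) ^ 2
      = (-1)^n * (stmt6_ms d n).2 := by
  have hirr := stmt6_irr_sqrt hns
  obtain ⟨hs0, -, hα⟩ := stmt6_inv hd hns n
  have hI := stmt6_keyI hirr n
  have hsq := stmt6_sq_sqrt d
  set P' : ℤ := cfP (Real.sqrt d) (n+1)
  set P : ℤ := cfP (Real.sqrt d) n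
  set Q' : ℤ := cfQ (Real.sqrt d) (n+1)
  set Q : ℤ := cfQ (Real.sqrt d) n
  set m : ℤ := (stmt6_ms d n).1
  set s : ℤ := (stmt6_ms d n).2
  -- real relation: √d * A = B
  have hr : Real.sqrt d * ((m * Q' + s * Q - P' : ℤ) : ℝ) = ((m * P' + s * P - d * Q' : ℤ) : ℝ) := by
    push_cast
    linear_combination (s:ℝ) * hI + ((P':ℝ) - Real.sqrt d * (Q':ℝ)) * hα - (Q':ℝ) * hsq
  have hA : m * Q' + s * Q - P' = 0 := by
    by_contra hA0
    have hAR : ((m * Q' + s * Q - P' : ℤ) : ℝ) ≠ 0 := by exact_mod_cast hA0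
    have h1 : Real.sqrt d = ((m * P' + s * P - d * Q' : ℤ) : ℝ) / ((m * Q' + s * Q - P' : ℤ) : ℝ) := by
      rw [eq_div_iff hAR]
      linear_combination hr
    have h2 : ((((m * P' + s * P - (d:ℤ) * Q' : ℤ) : ℚ) / ((m * Q' + s * Q - P' : ℤ) : ℚ) : ℚ) : ℝ)
        = Real.sqrt d := by
      rw [h1]; push_cast; ring
    exact hirr ⟨_, h2⟩
  have hB : m * P' + s * P - d * Q' = 0 := by
    have : ((m * P' + s * P - d * Q' : ℤ) : ℝ) = 0 := by
      rw [← hr, hA]; simp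
    exact_mod_cast this
  have hdet := stmt6_det (Real.sqrt d) n
  linear_combination -(P' : ℤ) * hA + (Q' : ℤ) * hB + s * hdet

end SqrtD3

section SqrtD4

variable {d : ℕ}

/-- If `s_k = 1` (k ≥ 1) then `α_k = a₀ + √d`. -/
lemma stmt6_s_one_alpha (hd : 0 < d) (hns : ¬ IsSquare d) {k : ℕ} (hk : 1 ≤ k)
    (hs : (stmt6_ms d k).2 = 1) :
    cfAlpha (Real.sqrt d) k = (cfA (Real.sqrt d) 0 : ℝ) + Real.sqrt d := by
  obtain ⟨-, -, hα⟩ := stmt6_inv hd hns k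
  obtain ⟨hc1, hc2⟩ := stmt6_conj hd hns k hk
  obtain ⟨ha1, ha2, -⟩ := stmt6_a0_lt hd hns
  rw [hs] at hα hc1 hc2
  push_cast at hα hc1 hc2
  rw [div_one] at hc1 hc2
  -- m_k is an integer in (√d - 1, √d), as is a₀, hence equal
  have hm : (stmt6_ms d k).1 = cfA (Real.sqrt d) 0 := by
    have h1 : (stmt6_ms d k).1 < cfA (Real.sqrt d) 0 + 1 := by
      have : ((stmt6_ms d k).1 : ℝ) < (cfA (Real.sqrt d) 0 : ℝ) + 1 := by linarith
      exact_mod_cast this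
    have h2 : cfA (Real.sqrt d) 0 < (stmt6_ms d k).1 + 1 := by
      have : (cfA (Real.sqrt d) 0 : ℝ) < ((stmt6_ms d k).1 : ℝ) + 1 := by linarith
      exact_mod_cast this
    omega
  rw [← hm]
  linarith

lemma stmt6_fract_int_add (a : ℤ) (x : ℝ) : Int.fract ((a : ℝ) + x) = Int.fract x :=
  Int.fract_intCast_add a x

/-- If `α_k = a₀ + √d` then the tails agree: `α_{k+j} = α_j` for `j ≥ 1`. -/
lemma stmt6_alpha_tail (hd : 0 < d) (hns : ¬ IsSquare d) {k : ℕ}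
    (hαk : cfAlpha (Real.sqrt d) k = (cfA (Real.sqrt d) 0 : ℝ) + Real.sqrt d) :
    ∀ j, 1 ≤ j → cfAlpha (Real.sqrt d) (k + j) = cfAlpha (Real.sqrt d) j := by
  intro j hj
  obtain ⟨i, rfl⟩ := Nat.exists_eq_add_of_le hj
  induction i with
  | zero =>
    rw [show k + 1 = k + 1 from rfl, cfAlpha_succ, cfAlpha_succ, hαk,
      stmt6_fract_int_add]
    rfl
  | succ i IH =>
    rw [show k + (1 + (i+1)) = (k + (1 + i)) + 1 from by omega, cfAlpha_succ,
      IH (by omega), show 1 + (i + 1) = (1 + i) + 1 from by omega, cfAlpha_succ]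

/-- Multiples of a period are periods. -/
lemma stmt6_mul_period {x : ℝ} {l : ℕ}
    (hp : ∀ n, 1 ≤ n → cfA x (n + l) = cfA x n) :
    ∀ t n, 1 ≤ n → cfA x (n + t * l) = cfA x n := by
  intro t
  induction t with
  | zero => intro n _; rw [Nat.zero_mul, Nat.add_zero]
  | succ t IH =>
    intro n hn
    rw [show n + (t+1) * l = (n + t * l) + l from by ring, hp _ (by omega), IH n hn]

/-- The least period divides any period. -/
lemma stmt6_least_dvd {x : ℝ} {l : ℕ}
    (hl : IsLeast {p : ℕ | 0 < p ∧ ∀ n, 1 ≤ n → cfA x (n + p) = cfA x n} l)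
    {k : ℕ} (hk : 0 < k) (hkp : ∀ n, 1 ≤ n → cfA x (n + k) = cfA x n) : l ∣ k := by
  obtain ⟨⟨hl0, hlp⟩, hmin⟩ := hl
  rcases Nat.eq_zero_or_pos (k % l) with hr | hr
  · exact Nat.dvd_of_mod_eq_zero hr
  · exfalso
    have hper : ∀ n, 1 ≤ n → cfA x (n + k % l) = cfA x n := by
      intro n hn
      have h1 : cfA x (n + k % l + (k / l) * l) = cfA x (n + k % l) :=
        stmt6_mul_period hlp (k / l) _ (by omega)
      have h2 : n + k % l + (k / l) * l = n + k := by
        have := Nat.mod_add_div k l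
        have h3 : (k / l) * l = l * (k / l) := Nat.mul_comm _ _
        omega
      rw [h2] at h1
      rw [← h1, hkp n hn]
    have := hmin ⟨hr, hper⟩
    have := Nat.mod_lt k hl0
    omega

end SqrtD4

section SqrtD5

variable {d : ℕ}

lemma stmt6_ss (hd : 0 < d) (hns : ¬ IsSquare d) (n : ℕ) :
    (stmt6_ms d n).2 * (stmt6_ms d (n+1)).2 = (d:ℤ) - (stmt6_ms d (n+1)).1 ^ 2 := by
  obtain ⟨-, hdvd, -⟩ := stmt6_inv hd hns n
  rw [stmt6_ms_snd]
  refine Int.mul_ediv_cancel' ?_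
  have h2 : (d:ℤ) - (stmt6_ms d (n+1)).1 ^ 2 = ((d:ℤ) - (stmt6_ms d n).1 ^ 2) +
      (stmt6_ms d n).2 * (cfA (Real.sqrt d) n *
        ((stmt6_ms d n).1 - (stmt6_ms d (n+1)).1)) := by
    rw [stmt6_ms_fst]; ring
  rw [h2]
  exact dvd_add hdvd (Dvd.intro _ rfl)

/-- equal total quotients have equal surd data. -/
lemma stmt6_ms_congr (hd : 0 < d) (hns : ¬ IsSquare d) {j k : ℕ}
    (h : cfAlpha (Real.sqrt d) j = cfAlpha (Real.sqrt d) k) :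
    stmt6_ms d j = stmt6_ms d k := by
  obtain ⟨hsj, -, hαj⟩ := stmt6_inv hd hns j
  obtain ⟨hsk, -, hαk⟩ := stmt6_inv hd hns k
  rw [h] at hαj
  have hirrα := stmt6_irr_alpha (stmt6_irr_sqrt hns) k
  have hs : (stmt6_ms d j).2 = (stmt6_ms d k).2 := by
    by_contra hne
    have hneR : ((stmt6_ms d j).2 : ℝ) - ((stmt6_ms d k).2 : ℝ) ≠ 0 := by
      intro h0
      exact hne (by exact_mod_cast sub_eq_zero.mp h0)
    have : cfAlpha (Real.sqrt d) k
        = ((((stmt6_ms d j).1 - (stmt6_ms d k).1 : ℤ) : ℚ) /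
            (((stmt6_ms d j).2 - (stmt6_ms d k).2 : ℤ) : ℚ) : ℚ) := by
      push_cast
      rw [eq_div_iff (by push_cast at hneR ⊢; exact hneR)]
      linear_combination hαj - hαk
    exact hirrα ⟨_, this.symm⟩
  have hm : (stmt6_ms d j).1 = (stmt6_ms d k).1 := by
    have : ((stmt6_ms d j).1 : ℝ) = ((stmt6_ms d k).1 : ℝ) := by
      rw [hs] at hαj
      linarith [hαj, hαk]
    exact_mod_cast this
  exact Prod.ext hm hs

/-- If `l` is a period of the partial quotients then `α_{j+l} = α_j` for `j ≥ 1`. -/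
lemma stmt6_alpha_per (hd : 0 < d) (hns : ¬ IsSquare d) {l : ℕ}
    (hlp : ∀ n, 1 ≤ n → cfA (Real.sqrt d) (n + l) = cfA (Real.sqrt d) n)
    {j : ℕ} (hj : 1 ≤ j) : cfAlpha (Real.sqrt d) (j + l) = cfAlpha (Real.sqrt d) j := by
  have hirr := stmt6_irr_sqrt hns
  have h1 := stmt6_sqrt_gt_one hd hns
  apply stmt6_cf_unique (stmt6_irr_alpha hirr (j+l)) (stmt6_irr_alpha hirr j)
    (stmt6_alpha_pos hirr h1 (j+l) |>.trans_le (le_refl _) |> fun h => h)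
    (stmt6_alpha_pos hirr h1 j |>.trans_le (le_refl _) |> fun h => h)
  intro i
  have e1 : cfA (cfAlpha (Real.sqrt d) (j+l)) i = cfA (Real.sqrt d) (j + l + i) := by
    rw [cfA, cfA, ← stmt6_alpha_add]
  have e2 : cfA (cfAlpha (Real.sqrt d) j) i = cfA (Real.sqrt d) (j + i) := by
    rw [cfA, cfA, ← stmt6_alpha_add]
  rw [e1, e2, show j + l + i = (j + i) + l from by omega, hlp _ (by omega)]

theorem stmt_6' (d : ℕ) (hd : 0 < d) (hns : ¬ IsSquare d) (l : ℕ)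
    (hl : IsLeast {p : ℕ | 0 < p ∧ ∀ n, 1 ≤ n →
      cfA (Real.sqrt d) (n + p) = cfA (Real.sqrt d) n} l) (n : ℕ) :
    |cfP (Real.sqrt d) (n + 2) ^ 2 - (d : ℤ) * cfQ (Real.sqrt d) (n + 2) ^ 2| = 1 ↔
      l ∣ (n + 1) := by
  have hirr := stmt6_irr_sqrt hns
  have hpell := stmt6_pell hd hns (n+1)
  have hspos := stmt6_s_pos hd hns (show 1 ≤ n+1 from by omega)
  have habs : |cfP (Real.sqrt d) (n + 2) ^ 2 - (d : ℤ) * cfQ (Real.sqrt d) (n + 2) ^ 2|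
      = (stmt6_ms d (n+1)).2 := by
    rw [show n + 2 = (n+1)+1 from rfl, hpell, abs_mul, abs_pow, abs_neg, abs_one,
      one_pow, one_mul, abs_of_pos hspos]
  rw [habs]
  constructor
  · -- s_{n+1} = 1 → l ∣ n+1
    intro hs1
    have hαk := stmt6_s_one_alpha hd hns (show 1 ≤ n+1 from by omega) hs1
    have htail := stmt6_alpha_tail hd hns hαk
    refine stmt6_least_dvd hl (by omega) ?_
    intro j hj
    rw [show j + (n+1) = (n+1) + j from by omega]
    rw [cfA, cfA, htail j hj]
  · -- l ∣ n+1 → s_{n+1} = 1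
    intro hdvd
    obtain ⟨⟨hl0, hlp⟩, -⟩ := hl
    -- α_{n+2} = α_1
    obtain ⟨t, ht⟩ := hdvd
    have ht1 : 1 ≤ t := by
      rcases Nat.eq_zero_or_pos t with rfl | h
      · omega
      · exact h
    have hα1 : cfAlpha (Real.sqrt d) (n + 2) = cfAlpha (Real.sqrt d) 1 := by
      have key : ∀ u, 1 ≤ u → cfAlpha (Real.sqrt d) (1 + u * l) = cfAlpha (Real.sqrt d) 1 := by
        intro u hu
        induction u with
        | zero => omega
        | succ u IH =>
          rcases Nat.eq_zero_or_pos u with rfl | hu'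
          · rw [show 1 + 1 * l = 1 + l from by ring]
            exact stmt6_alpha_per hd hns hlp (le_refl 1)
          · rw [show 1 + (u+1) * l = (1 + u * l) + l from by ring,
              stmt6_alpha_per hd hns hlp (show 1 ≤ 1 + u * l from by omega), IH hu']
      have := key t ht1
      rw [show n + 2 = 1 + t * l from by rw [Nat.mul_comm t l]; omega]
      exact this
    have hms := stmt6_ms_congr hd hns hα1
    have hss1 := stmt6_ss hd hns (n+1)
    have hss0' : (stmt6_ms d 1).2 = (d:ℤ) - (stmt6_ms d 1).1 ^ 2 := by
      have h := stmt6_ss hd hns 0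
      have hms0 : (stmt6_ms d 0).2 = 1 := rfl
      rw [show (0:ℕ) + 1 = 1 from rfl, hms0, one_mul] at h
      exact h
    rw [show n + 1 + 1 = n + 2 from rfl, hms, ← hss0'] at hss1
    have hs1ne : (stmt6_ms d 1).2 ≠ 0 := (stmt6_inv hd hns 1).1
    exact mul_right_cancel₀ hs1ne (hss1.trans (one_mul _).symm)

end SqrtD5

/-- for a positive non-square integer `d` with minimal period `l` of the
continued fraction of `√d` and convergents `p_n/q_n` (`p_n = cfP (√d) (n+2)`,
`q_n = cfQ (√d) (n+2)`): for every `n ≥ 0`, `|p_n² - d q_n²| = 1` iff `l ∣ n + 1`. -/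
theorem stmt_6 (d : ℕ) (hd : 0 < d) (hns : ¬ IsSquare d) (l : ℕ)
    (hl : IsLeast {p : ℕ | 0 < p ∧ ∀ n, 1 ≤ n →
      cfA (Real.sqrt d) (n + p) = cfA (Real.sqrt d) n} l) (n : ℕ) :
    |cfP (Real.sqrt d) (n + 2) ^ 2 - (d : ℤ) * cfQ (Real.sqrt d) (n + 2) ^ 2| = 1 ↔
      l ∣ (n + 1) := by
  exact stmt_6' d hd hns l hl n
end
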